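/- The first Lie algebra cohomology of L₆,₃ (with de¹ = e²³, de² = 2e¹², de³ = -2e¹³, de⁴ = e¹⁴+e²⁵+e⁴⁶, de⁵ = -e¹⁵+e³⁴+e⁵⁶, de⁶ = 0) has dimension 1, i.e. the space of closed 1-forms is one-dimensional, spanned by e⁶. -/
import Mathlib


/-!
STATEMENT 13: The first Lie algebra cohomology of L₆,₃
(with de¹ = e²³, de² = 2e¹², de³ = -2e¹³, de⁴ = e¹⁴+e²⁵+e⁴⁶, de⁵ = -e¹⁵+e³⁴+e⁵⁶, de⁶ = 0)
has dimension 1, i.e. the space of closed 1-forms is one-dimensional, spanned by e⁶.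

Model: a 1-form α = Σ aₘ e^m is encoded by its coefficient vector a : Fin 6 → ℝ
(indices shifted to 0,…,5).  Closedness dα = 0 means dα(e_i,e_j) = -α([e_i,e_j]) = 0
for all i,j, i.e. Σ_m a_m · (de^m)(e_i,e_j) = 0 for all i,j.
-/

/-- Value of the 2-form e^a ∧ e^b on the pair of basis vectors (e_i, e_j). -/
def wf (a b i j : Fin 6) : ℝ :=
  (if a = i then (1:ℝ) else 0) * (if b = j then (1:ℝ) else 0) -
  (if a = j then (1:ℝ) else 0) * (if b = i then (1:ℝ) else 0)

/-- Structure equations of L₆,₃. -/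
def dL63 (k i j : Fin 6) : ℝ :=
  if k = 0 then wf 1 2 i j
  else if k = 1 then 2 * wf 0 1 i j
  else if k = 2 then -2 * wf 0 2 i j
  else if k = 3 then wf 0 3 i j + wf 1 4 i j + wf 3 5 i j
  else if k = 4 then -(wf 0 4 i j) + wf 2 3 i j + wf 4 5 i j
  else 0

/-- The closed 1-forms on L₆,₃ form the one-dimensional space spanned by e⁶:
a 1-form with coefficients a is closed iff it is a multiple of e⁶. -/
theorem L63_closed_one_forms (a : Fin 6 → ℝ) :
    (∀ i j : Fin 6, ∑ m : Fin 6, a m * dL63 m i j = 0) ↔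
      ∃ t : ℝ, a = t • (Pi.single (5 : Fin 6) (1:ℝ) : Fin 6 → ℝ) := by
  constructor
  · intro h
    refine ⟨a 5, ?_⟩
    have h12 := h 1 2
    have h01 := h 0 1
    have h02 := h 0 2
    have h03 := h 0 3
    have h04 := h 0 4
    simp [dL63, wf, Fin.sum_univ_six] at h12 h01 h02 h03 h04
    funext k
    fin_cases k <;>
      simp_all [Pi.single_apply]
  · rintro ⟨t, rfl⟩ i j
    simp [dL63, wf, Fin.sum_univ_six, Pi.single_apply]
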